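/- arXiv:2112.03016 — 3 statements merged into one kernel-verified Lean document; each statement's English description precedes it below -/
import Mathlib

section
/- The Mallows–Riordan polynomials satisfy J̃_{n+1}(-1) = J_{n+1}(-1) = A_n for all n ≥ 0, where A_n is the n-th zigzag number, as a consequence of the identity cos z/(1 - sin z) = (1 + sin z)/cos z. -/
open Polynomial MeasureTheory

/-- Mallows–Riordan polynomials `J n`, via the Kreweras recursion
`J (n+2) = ∑_{i=0}^n C(n,i) (1+θ+⋯+θ^i) J (i+1) J (n+1-i)`, `J 1 = 1`. -/
noncomputable def MRJ : ℕ → Polynomial ℚ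
  | 0 => 0
  | 1 => 1
  | n + 2 =>
      ∑ i ∈ (Finset.range (n + 1)).attach,
        (n.choose i.1 : Polynomial ℚ) * (∑ j ∈ Finset.range (i.1 + 1), X ^ j) *
          MRJ (i.1 + 1) * MRJ (n + 1 - i.1)
  decreasing_by
  · have := Finset.mem_range.mp i.2; omega
  · omega

/-- The modified polynomials `J̃ n`, determined by `J̃ 1 = 1` and the formal power
series identity `∑ J̃ (n+1) z^n/n! = (∑ (-1)^n J (n+1) z^n/n!)⁻¹`, equivalently the
recursion `J̃ (n+1) = ∑_{k=1}^n (-1)^{k-1} C(n,k) J (k+1) J̃ (n+1-k)`. -/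
noncomputable def MRJt : ℕ → Polynomial ℚ
  | 0 => 0
  | 1 => 1
  | n + 2 =>
      ∑ k ∈ (Finset.Icc 1 (n + 1)).attach,
        (-1 : Polynomial ℚ) ^ (k.1 - 1) * ((n + 1).choose k.1 : Polynomial ℚ) *
          MRJ (k.1 + 1) * MRJt (n + 2 - k.1)
  decreasing_by
  have := (Finset.mem_Icc.mp k.2).1; omega

/-- Euler zigzag numbers, as the Taylor coefficients at `0` of `sec z + tan z`. -/
noncomputable def zigzag (n : ℕ) : ℝ :=
  iteratedDeriv n (fun z : ℝ => (1 + Real.sin z) / Real.cos z) 0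


section Aux
open Finset

noncomputable def szf : ℝ → ℝ := fun z : ℝ => (1 + Real.sin z) / Real.cos z

def sS : Set ℝ := {x | Real.cos x ≠ 0}

lemma sS_open : IsOpen sS := isOpen_ne_fun Real.continuous_cos continuous_const

lemma sS_zero : (0:ℝ) ∈ sS := by simp [sS]

lemma szf_smooth : ContDiffOn ℝ ⊤ szf sS := by
  exact ContDiffOn.div (contDiff_const.add Real.contDiff_sin).contDiffOn
    Real.contDiff_cos.contDiffOn (fun x hx => hx)

lemma iteratedDerivWithin_of_isOpen' {s : Set ℝ} (hs : IsOpen s) {x : ℝ} (hx : x ∈ s)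
    (n : ℕ) (f : ℝ → ℝ) : iteratedDerivWithin n f s x = iteratedDeriv n f x := by
  simp [iteratedDerivWithin, iteratedDeriv, iteratedFDerivWithin_of_isOpen n hs hx]

lemma deriv_szf {x : ℝ} (hx : x ∈ sS) : deriv szf x = (1 + szf x * szf x) / 2 := by
  have hc : Real.cos x ≠ 0 := hx
  have h1 : HasDerivAt (fun z : ℝ => 1 + Real.sin z) (Real.cos x) x := by
    exact (Real.hasDerivAt_sin x).const_add 1
  have h2 : HasDerivAt Real.cos (-Real.sin x) x := Real.hasDerivAt_cos x
  have := (h1.div h2 hc).deriv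
  unfold szf
  show deriv ((fun z => 1 + Real.sin z) / Real.cos) x = _
  rw [this]
  have hs := Real.sin_sq_add_cos_sq x
  field_simp
  ring_nf
  nlinarith [hs]

lemma binom_aux (A B : ℕ → ℝ) (n : ℕ) :
    (∑ k ∈ range (n + 1), (n.choose k : ℝ) * A (k + 1) * B (n - k)) +
      (∑ k ∈ range (n + 1), (n.choose k : ℝ) * A k * B (n + 1 - k)) =
    ∑ k ∈ range (n + 2), ((n + 1).choose k : ℝ) * A k * B (n + 1 - k) := by
  rw [Finset.sum_range_succ' (fun k => ((n + 1).choose k : ℝ) * A k * B (n + 1 - k)) (n + 1)]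
  rw [Finset.sum_range_succ' (fun k => (n.choose k : ℝ) * A k * B (n + 1 - k)) n]
  simp only [Nat.succ_sub_succ, Nat.choose_succ_succ, Nat.choose_zero_right, Nat.cast_add,
    Nat.cast_one, Nat.sub_zero, add_mul, Finset.sum_add_distrib]
  rw [Finset.sum_range_succ (fun k => (n.choose (k + 1) : ℝ) * A (k + 1) * B (n - k)) n]
  simp only [Nat.choose_succ_self, Nat.cast_zero, zero_mul, add_zero, Nat.succ_eq_add_one]
  ring

lemma leibniz_pt {s : Set ℝ} (hs : IsOpen s) (n : ℕ) :
    ∀ f g : ℝ → ℝ, ContDiffOn ℝ ⊤ f s → ContDiffOn ℝ ⊤ g s → ∀ x ∈ s,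
      iteratedDeriv n (fun z => f z * g z) x =
        ∑ k ∈ range (n + 1), (n.choose k : ℝ) * iteratedDeriv k f x *
          iteratedDeriv (n - k) g x := by
  induction n with
  | zero => intro f g hf hg x hx; simp
  | succ n ih =>
    intro f g hf hg x hx
    have hf' : ContDiffOn ℝ ⊤ (deriv f) s := hf.deriv_of_isOpen hs (by simp)
    have hg' : ContDiffOn ℝ ⊤ (deriv g) s := hg.deriv_of_isOpen hs (by simp)
    have heq : Set.EqOn (deriv fun z => f z * g z)
        (fun z => deriv f z * g z + f z * deriv g z) s := by
      intro y hy
      exact deriv_fun_mul ((hf.differentiableOn (by simp)).differentiableAt (hs.mem_nhds hy))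
        ((hg.differentiableOn (by simp)).differentiableAt (hs.mem_nhds hy))
    rw [iteratedDeriv_succ', heq.iteratedDeriv_of_isOpen hs n hx]
    have hFG : iteratedDeriv n (fun z => deriv f z * g z + f z * deriv g z) x =
        iteratedDeriv n (fun z => deriv f z * g z) x +
          iteratedDeriv n (fun z => f z * deriv g z) x := by
      rw [← iteratedDerivWithin_of_isOpen' hs hx, ← iteratedDerivWithin_of_isOpen' hs hx,
        ← iteratedDerivWithin_of_isOpen' hs hx]
      exact iteratedDerivWithin_add hx hs.uniqueDiffOn
        (((hf'.mul hg).of_le le_top).contDiffWithinAt hx) (((hf.mul hg').of_le le_top).contDiffWithinAt hx)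
    rw [hFG, ih (deriv f) g hf' hg x hx, ih f (deriv g) hf hg' x hx]
    have e1 : ∀ k, iteratedDeriv k (deriv f) x = iteratedDeriv (k + 1) f x := by
      intro k; rw [iteratedDeriv_succ']
    have e2 : ∀ k, iteratedDeriv k (deriv g) x = iteratedDeriv (k + 1) g x := by
      intro k; rw [iteratedDeriv_succ']
    simp only [e1, e2]
    have e3 : ∀ k ∈ range (n + 1), (n.choose k : ℝ) * iteratedDeriv k f x *
        iteratedDeriv (n - k + 1) g x = (n.choose k : ℝ) * iteratedDeriv k f x *
        iteratedDeriv (n + 1 - k) g x := by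
      intro k hk
      have : n - k + 1 = n + 1 - k := by
        have := Finset.mem_range.mp hk; omega
      rw [this]
    rw [Finset.sum_congr rfl e3]
    exact binom_aux (fun k => iteratedDeriv k f x) (fun k => iteratedDeriv k g x) n


lemma zigzag_eq (n : ℕ) : zigzag n = iteratedDeriv n szf 0 := rfl

lemma zigzag_zero : zigzag 0 = 1 := by
  simp [zigzag]

lemma szfneg_smooth : ContDiffOn ℝ ⊤ (fun z => szf (-z)) sS := by
  have : Set.MapsTo (fun z : ℝ => -z) sS sS := by
    intro x hx
    show Real.cos (-x) ≠ 0
    rw [Real.cos_neg]; exact hx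
  exact szf_smooth.comp (contDiff_neg.contDiffOn) this

lemma iteratedDeriv_const_fun (c : ℝ) : ∀ n, iteratedDeriv n (fun _ : ℝ => c) =
    fun _ => if n = 0 then c else 0
  | 0 => by simp
  | n + 1 => by
      rw [iteratedDeriv_succ, iteratedDeriv_const_fun c n]
      funext x
      simp

lemma mulC (n : ℕ) :
    ∑ k ∈ range (n + 1), (-1 : ℝ) ^ k * (n.choose k : ℝ) * zigzag k * zigzag (n - k) =
      if n = 0 then 1 else 0 := by
  have heq : Set.EqOn (fun z => szf z * szf (-z)) (fun _ => (1 : ℝ)) sS := by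
    intro y hy
    have hc : Real.cos y ≠ 0 := hy
    simp only [szf, Real.sin_neg, Real.cos_neg]
    field_simp
    nlinarith [Real.sin_sq_add_cos_sq y]
  have h2 : iteratedDeriv n (fun z => szf z * szf (-z)) 0 = if n = 0 then 1 else 0 := by
    rw [heq.iteratedDeriv_of_isOpen sS_open n sS_zero, iteratedDeriv_const_fun 1 n]
  have h1 := leibniz_pt sS_open n szf (fun z => szf (-z)) szf_smooth szfneg_smooth 0 sS_zero
  rw [h2] at h1
  have h3 : ∀ k ∈ range (n + 1), (n.choose k : ℝ) * iteratedDeriv k szf 0 *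
      iteratedDeriv (n - k) (fun z => szf (-z)) 0 =
      (-1 : ℝ) ^ (n - k) * (n.choose k : ℝ) * zigzag k * zigzag (n - k) := by
    intro k hk
    rw [iteratedDeriv_comp_neg (n - k) szf 0, neg_zero]
    rw [zigzag_eq, zigzag_eq]
    simp [smul_eq_mul]
    ring
  rw [Finset.sum_congr rfl h3] at h1
  rw [← Finset.sum_range_reflect (fun k => (-1 : ℝ) ^ k * (n.choose k : ℝ) *
    zigzag k * zigzag (n - k)) (n + 1)]
  rw [h1]
  apply Finset.sum_congr rfl
  intro j hj
  have hjn : j ≤ n := by have := Finset.mem_range.mp hj; omega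
  have e1 : n + 1 - 1 - j = n - j := by omega
  have e2 : n - (n - j) = j := by omega
  rw [e1, e2, Nat.choose_symm hjn]
  ring

lemma half_aux (n : ℕ) : iteratedDeriv n (fun z => (1 + szf z * szf z) / 2) 0 =
    (if n = 0 then (1 : ℝ) else 0) / 2 + 2⁻¹ * iteratedDeriv n (fun z => szf z * szf z) 0 := by
  cases n with
  | zero => simp; ring
  | succ m =>
    have hfun : (fun z => (1 + szf z * szf z) / 2) =
        fun z => 2⁻¹ + 2⁻¹ * (szf z * szf z) := by
      funext z; ring
    rw [hfun, ← iteratedDerivWithin_of_isOpen' sS_open sS_zero,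
      iteratedDerivWithin_const_add (Nat.succ_pos m),
      iteratedDerivWithin_const_mul sS_zero sS_open.uniqueDiffOn 2⁻¹
        (((szf_smooth.mul szf_smooth).of_le le_top).contDiffWithinAt sS_zero),
      iteratedDerivWithin_of_isOpen' sS_open sS_zero]
    simp

lemma zigzag_rec (n : ℕ) : zigzag (n + 1) =
    ∑ i ∈ range (n + 1), (n.choose i : ℝ) * (if Even i then 1 else 0) *
      zigzag i * zigzag (n - i) := by
  have heq : Set.EqOn (deriv szf) (fun z => (1 + szf z * szf z) / 2) sS :=
    fun y hy => deriv_szf hy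
  have h0 : zigzag (n + 1) = iteratedDeriv n (fun z => (1 + szf z * szf z) / 2) 0 := by
    rw [zigzag_eq, iteratedDeriv_succ', heq.iteratedDeriv_of_isOpen sS_open n sS_zero]
  have h1 := leibniz_pt sS_open n szf szf szf_smooth szf_smooth 0 sS_zero
  have h2 := mulC n
  rw [h0, half_aux n, h1, ← h2]
  rw [Finset.sum_div, Finset.mul_sum, ← Finset.sum_add_distrib]
  apply Finset.sum_congr rfl
  intro k hk
  rw [← zigzag_eq, ← zigzag_eq]
  rcases Nat.even_or_odd k with he | ho
  · rw [if_pos he, he.neg_one_pow]; ring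
  · rw [if_neg (Nat.not_even_iff_odd.mpr ho), ho.neg_one_pow]; ring

lemma zigzag_rec' (n : ℕ) : zigzag (n + 1) =
    ∑ i ∈ range (n + 1), (-1 : ℝ) ^ i * ((n + 1).choose (i + 1) : ℝ) *
      zigzag (i + 1) * zigzag (n - i) := by
  have h := mulC (n + 1)
  rw [if_neg (Nat.succ_ne_zero n)] at h
  rw [Finset.sum_range_succ' (fun k => (-1 : ℝ) ^ k * ((n + 1).choose k : ℝ) *
    zigzag k * zigzag (n + 1 - k)) (n + 1)] at h
  simp only [pow_zero, Nat.choose_zero_right, Nat.cast_one, one_mul, Nat.sub_zero,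
    zigzag_zero, Nat.succ_sub_succ] at h
  have : ∑ i ∈ range (n + 1), (-1 : ℝ) ^ (i + 1) * ((n + 1).choose (i + 1) : ℝ) *
      zigzag (i + 1) * zigzag (n - i) =
      -∑ i ∈ range (n + 1), (-1 : ℝ) ^ i * ((n + 1).choose (i + 1) : ℝ) *
      zigzag (i + 1) * zigzag (n - i) := by
    rw [← Finset.sum_neg_distrib]
    apply Finset.sum_congr rfl
    intro i _
    rw [pow_succ]
    ring
  rw [this] at h
  linarith [h]

noncomputable def aJ (n : ℕ) : ℚ := (MRJ (n + 1)).eval (-1)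
noncomputable def bJ (n : ℕ) : ℚ := (MRJt (n + 1)).eval (-1)

lemma aJ_zero : aJ 0 = 1 := by rw [aJ, MRJ]; simp

lemma bJ_zero : bJ 0 = 1 := by rw [bJ, MRJt]; simp

lemma aJ_rec (n : ℕ) : aJ (n + 1) =
    ∑ i ∈ range (n + 1), (n.choose i : ℚ) * (if Even i then 1 else 0) *
      aJ i * aJ (n - i) := by
  show (MRJ (n + 2)).eval (-1) = _
  rw [MRJ, Polynomial.eval_finset_sum]
  rw [Finset.sum_attach (range (n + 1)) (fun i => eval (-1)
    ((n.choose i : Polynomial ℚ) * (∑ j ∈ Finset.range (i + 1), X ^ j) *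
      MRJ (i + 1) * MRJ (n + 1 - i)))]
  apply Finset.sum_congr rfl
  intro i hi
  have hin : i ≤ n := by have := Finset.mem_range.mp hi; omega
  have e1 : n + 1 - i = (n - i) + 1 := by omega
  rw [e1]
  simp only [eval_mul, eval_natCast, Polynomial.eval_finset_sum, eval_pow, eval_X]
  rw [neg_one_geom_sum]
  have : (if Even (i + 1) then (0:ℚ) else 1) = if Even i then 1 else 0 := by
    by_cases h : Even i
    · simp [Nat.even_add_one, h]
    · simp [Nat.even_add_one, h]
  rw [this]
  rfl

lemma bJ_rec (n : ℕ) : bJ (n + 1) =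
    ∑ i ∈ range (n + 1), (-1 : ℚ) ^ i * ((n + 1).choose (i + 1) : ℚ) *
      aJ (i + 1) * bJ (n - i) := by
  show (MRJt (n + 2)).eval (-1) = _
  rw [MRJt, Polynomial.eval_finset_sum]
  rw [Finset.sum_attach (Finset.Icc 1 (n + 1)) (fun k => eval (-1)
    ((-1 : Polynomial ℚ) ^ (k - 1) * ((n + 1).choose k : Polynomial ℚ) *
      MRJ (k + 1) * MRJt (n + 2 - k)))]
  rw [← Finset.Ico_add_one_right_eq_Icc, Finset.sum_Ico_eq_sum_range]
  have hrange : n + 1 + 1 - 1 = n + 1 := by omega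
  rw [hrange]
  apply Finset.sum_congr rfl
  intro i hi
  have hin : i ≤ n := by have := Finset.mem_range.mp hi; omega
  have e1 : 1 + i - 1 = i := by omega
  have e2 : n + 2 - (1 + i) = (n - i) + 1 := by omega
  rw [e1, e2]
  simp only [eval_mul, eval_natCast, eval_pow, eval_neg, eval_one]
  have e3 : 1 + i = i + 1 := by omega
  rw [e3]
  rfl


lemma cast_aJ : ∀ n, ((aJ n : ℚ) : ℝ) = zigzag n := by
  intro n
  induction n using Nat.strong_induction_on with
  | _ n ih =>
    cases n with
    | zero => rw [aJ_zero, zigzag_zero]; norm_num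
    | succ m =>
      rw [aJ_rec, zigzag_rec]
      push_cast
      apply Finset.sum_congr rfl
      intro i hi
      have h1 : i < m + 1 := Finset.mem_range.mp hi
      rw [← ih i (by omega), ← ih (m - i) (by omega)]
      by_cases h : Even i <;> simp [h]

lemma cast_bJ : ∀ n, ((bJ n : ℚ) : ℝ) = zigzag n := by
  intro n
  induction n using Nat.strong_induction_on with
  | _ n ih =>
    cases n with
    | zero => rw [bJ_zero, zigzag_zero]; norm_num
    | succ m =>
      rw [bJ_rec, zigzag_rec']
      push_cast
      apply Finset.sum_congr rfl
      intro i hi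
      have h1 : i < m + 1 := Finset.mem_range.mp hi
      rw [← ih (m - i) (by omega), ← cast_aJ (i + 1)]

end Aux

theorem MRJt_eval_neg_one_eq_zigzag (n : ℕ) :
    (MRJt (n + 1)).eval (-1) = (MRJ (n + 1)).eval (-1) ∧
    (((MRJ (n + 1)).eval (-1) : ℚ) : ℝ) = zigzag n := by
  constructor
  · have h1 : ((bJ n : ℚ) : ℝ) = ((aJ n : ℚ) : ℝ) := by rw [cast_bJ, cast_aJ]
    have h2 : bJ n = aJ n := by exact_mod_cast h1
    exact h2
  · exact cast_aJ n
end

section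
/- The derivatives of the Mallows–Riordan polynomials at θ = -1 satisfy J'_{n+1}(-1) = (n/2)·J_{n+1}(-1) = (n/2)·A_n for all n ≥ 2, and J'_{n+1}(-1) = 0 for n ∈ {0,1}. -/
open Polynomial MeasureTheory

namespace MRaux
open Real Set Topology Filter



noncomputable def S : Set ℝ := Set.Ioo (-(π/2)) (π/2)

lemma S_open : IsOpen S := isOpen_Ioo
lemma S_mem_zero : (0:ℝ) ∈ S := by
  have := Real.pi_pos
  constructor <;> simp <;> linarith

lemma S_unique : UniqueDiffOn ℝ S := S_open.uniqueDiffOn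

lemma cos_ne {x : ℝ} (hx : x ∈ S) : Real.cos x ≠ 0 :=
  (Real.cos_pos_of_mem_Ioo hx).ne'

lemma S_neg {x : ℝ} (hx : x ∈ S) : -x ∈ S := by
  obtain ⟨h1, h2⟩ := hx; exact ⟨by linarith, by linarith⟩

/-- within = global on `S` -/
lemma itdW {f : ℝ → ℝ} {n : ℕ} {x : ℝ} (hx : x ∈ S) :
    iteratedDerivWithin n f S x = iteratedDeriv n f x := by
  rw [iteratedDerivWithin_eq_iteratedFDerivWithin, iteratedDeriv_eq_iteratedFDeriv,
    iteratedFDerivWithin_of_isOpen n S_open hx]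

lemma itd_smooth {f : ℝ → ℝ} (hf : ContDiffOn ℝ ⊤ f S) (n : ℕ) :
    ContDiffOn ℝ ⊤ (iteratedDeriv n f) S := by
  induction n with
  | zero => simpa [iteratedDeriv_zero] using hf
  | succ n ih =>
    rw [iteratedDeriv_succ]
    have := ih.deriv_of_isOpen S_open (m := ⊤) le_top
    exact this

lemma itd_diff {f : ℝ → ℝ} (hf : ContDiffOn ℝ ⊤ f S) (n : ℕ) {x : ℝ} (hx : x ∈ S) :
    DifferentiableAt ℝ (iteratedDeriv n f) x :=
  ((itd_smooth hf n).contDiffAt (S_open.mem_nhds hx)).differentiableAt (by simp)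

lemma itd_add {f g : ℝ → ℝ} (hf : ContDiffOn ℝ ⊤ f S) (hg : ContDiffOn ℝ ⊤ g S)
    (n : ℕ) {x : ℝ} (hx : x ∈ S) :
    iteratedDeriv n (fun z => f z + g z) x = iteratedDeriv n f x + iteratedDeriv n g x := by
  rw [← itdW hx, ← itdW hx, ← itdW hx]
  exact iteratedDerivWithin_add hx S_unique ((hf x hx).of_le le_top) ((hg x hx).of_le le_top)

lemma itd_sub {f g : ℝ → ℝ} (hf : ContDiffOn ℝ ⊤ f S) (hg : ContDiffOn ℝ ⊤ g S)
    (n : ℕ) {x : ℝ} (hx : x ∈ S) :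
    iteratedDeriv n (fun z => f z - g z) x = iteratedDeriv n f x - iteratedDeriv n g x := by
  rw [← itdW hx, ← itdW hx, ← itdW hx]
  exact iteratedDerivWithin_sub hx S_unique ((hf x hx).of_le le_top) ((hg x hx).of_le le_top)

lemma itd_cmul (c : ℝ) {f : ℝ → ℝ} (hf : ContDiffOn ℝ ⊤ f S)
    (n : ℕ) {x : ℝ} (hx : x ∈ S) :
    iteratedDeriv n (fun z => c * f z) x = c * iteratedDeriv n f x := by
  rw [← itdW hx, ← itdW hx]
  exact iteratedDerivWithin_const_mul hx S_unique c ((hf x hx).of_le le_top)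

lemma itd_one (n : ℕ) (hn : 1 ≤ n) (x : ℝ) :
    iteratedDeriv n (fun _ : ℝ => (1:ℝ)) x = 0 := by
  induction n generalizing x with
  | zero => omega
  | succ m ih =>
    rw [iteratedDeriv_succ]
    rcases Nat.eq_zero_or_pos m with h | h
    · subst h; simp [iteratedDeriv_zero]
    · have : iteratedDeriv m (fun _ : ℝ => (1:ℝ)) = fun _ => 0 := by
        funext y; exact ih h y
      rw [this]; simp

lemma leib_alg (F G : ℕ → ℝ) (n : ℕ) :
    ∑ i ∈ Finset.range (n+2), ((n+1).choose i : ℝ) * (F i * G (n+1-i))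
      = (∑ i ∈ Finset.range (n+1), (n.choose i : ℝ) * (F (i+1) * G (n-i)))
        + ∑ i ∈ Finset.range (n+1), (n.choose i : ℝ) * (F i * G (n+1-i)) := by
  rw [Finset.sum_range_succ' (fun i => ((n+1).choose i : ℝ) * (F i * G (n+1-i)))]
  have h1 : ∀ i ∈ Finset.range (n+1),
      (((n+1).choose (i+1) : ℝ)) * (F (i+1) * G (n+1-(i+1)))
        = (n.choose i : ℝ) * (F (i+1) * G (n-i)) + (n.choose (i+1) : ℝ) * (F (i+1) * G (n-i)) := by
    intro i _
    rw [Nat.choose_succ_succ', Nat.succ_sub_succ]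
    push_cast
    ring
  rw [Finset.sum_congr rfl h1, Finset.sum_add_distrib]
  have h2 : ∑ i ∈ Finset.range (n+1), (n.choose i : ℝ) * (F i * G (n+1-i))
      = (∑ i ∈ Finset.range n, (n.choose (i+1):ℝ) * (F (i+1) * G (n+1-(i+1))))
        + (n.choose 0 : ℝ) * (F 0 * G (n+1-0)) :=
    Finset.sum_range_succ' (fun i => (n.choose i : ℝ) * (F i * G (n+1-i))) n
  have h3 : ∑ i ∈ Finset.range (n+1), (n.choose (i+1) : ℝ) * (F (i+1) * G (n-i))
      = ∑ i ∈ Finset.range n, (n.choose (i+1) : ℝ) * (F (i+1) * G (n-i)) := by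
    rw [Finset.sum_range_succ]
    simp [Nat.choose_succ_self]
  rw [h3]
  have h4 : ∀ i ∈ Finset.range n, (n.choose (i+1) : ℝ) * (F (i+1) * G (n+1-(i+1)))
      = (n.choose (i+1) : ℝ) * (F (i+1) * G (n-i)) := by
    intro i _; rw [Nat.succ_sub_succ]
  rw [h2, Finset.sum_congr rfl h4]
  simp
  ring

lemma itd_mul {f g : ℝ → ℝ} (hf : ContDiffOn ℝ ⊤ f S) (hg : ContDiffOn ℝ ⊤ g S) (n : ℕ)
    {x : ℝ} (hx : x ∈ S) :
    iteratedDeriv n (fun z => f z * g z) x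
      = ∑ i ∈ Finset.range (n+1),
          (n.choose i : ℝ) * (iteratedDeriv i f x * iteratedDeriv (n-i) g x) := by
  induction n generalizing x with
  | zero => simp
  | succ n ih =>
    rw [iteratedDeriv_succ]
    have hev : iteratedDeriv n (fun z => f z * g z) =ᶠ[𝓝 x]
        fun y => ∑ i ∈ Finset.range (n+1),
          (n.choose i : ℝ) * (iteratedDeriv i f y * iteratedDeriv (n-i) g y) := by
      filter_upwards [S_open.mem_nhds hx] with y hy using ih hy
    rw [hev.deriv_eq]
    have hdiff : ∀ i ∈ Finset.range (n+1), DifferentiableAt ℝ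
        (fun y => (n.choose i : ℝ) * (iteratedDeriv i f y * iteratedDeriv (n-i) g y)) x := by
      intro i _
      exact (((itd_diff hf i hx).mul (itd_diff hg (n-i) hx)).const_mul _)
    rw [deriv_fun_sum hdiff]
    have hterm : ∀ i ∈ Finset.range (n+1),
        deriv (fun y => (n.choose i : ℝ) * (iteratedDeriv i f y * iteratedDeriv (n-i) g y)) x
          = (n.choose i : ℝ) * (iteratedDeriv (i+1) f x * iteratedDeriv (n-i) g x)
            + (n.choose i : ℝ) * (iteratedDeriv i f x * iteratedDeriv (n+1-i) g x) := by
      intro i hi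
      rw [deriv_const_mul (d := fun y => iteratedDeriv i f y * iteratedDeriv (n-i) g y) _ ((itd_diff hf i hx).mul (itd_diff hg (n-i) hx)),
        deriv_fun_mul (itd_diff hf i hx) (itd_diff hg (n-i) hx), ← iteratedDeriv_succ,
        ← iteratedDeriv_succ]
      have : n - i + 1 = n + 1 - i := by
        have := Finset.mem_range.mp hi; omega
      rw [this]; ring
    rw [Finset.sum_congr rfl hterm, Finset.sum_add_distrib]
    exact (leib_alg (fun i => iteratedDeriv i f x) (fun j => iteratedDeriv j g x) n).symm

noncomputable def g : ℝ → ℝ := fun z => (1 + Real.sin z) / Real.cos z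
noncomputable def sec : ℝ → ℝ := fun z => (Real.cos z)⁻¹
noncomputable def tn : ℝ → ℝ := fun z => Real.sin z / Real.cos z
noncomputable def q : ℝ → ℝ := fun z => ((g z)^2 - 1) / 4
noncomputable def φ : ℝ → ℝ := fun z => z * q z
noncomputable def φe : ℝ → ℝ := fun z => (2⁻¹ : ℝ) * (φ z + φ (-z))
noncomputable def U : ℝ → ℝ := fun z => (2⁻¹ : ℝ) * ((z * (sec z)^2 + tn z) - z * (sec z * tn z))

lemma hcos : ContDiffOn ℝ ⊤ Real.cos S := Real.contDiff_cos.contDiffOn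
lemma hsin : ContDiffOn ℝ ⊤ Real.sin S := Real.contDiff_sin.contDiffOn
lemma hg : ContDiffOn ℝ ⊤ g S := (contDiffOn_const.add hsin).div hcos (fun _ hx => cos_ne hx)
lemma hsec : ContDiffOn ℝ ⊤ sec S := hcos.inv (fun _ hx => cos_ne hx)
lemma htn : ContDiffOn ℝ ⊤ tn S := hsin.div hcos (fun _ hx => cos_ne hx)
lemma hq : ContDiffOn ℝ ⊤ q S := ((hg.pow 2).sub contDiffOn_const).div_const 4
lemma hφ : ContDiffOn ℝ ⊤ φ S := contDiffOn_id.mul hq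
lemma hφneg : ContDiffOn ℝ ⊤ (fun z => φ (-z)) S :=
  hφ.comp contDiff_neg.contDiffOn (fun _ hx => S_neg hx)
lemma hφe : ContDiffOn ℝ ⊤ φe S := contDiffOn_const.mul (hφ.add hφneg)
lemma hU : ContDiffOn ℝ ⊤ U S :=
  contDiffOn_const.mul (((contDiffOn_id.mul (hsec.pow 2)).add htn).sub
    (contDiffOn_id.mul (hsec.mul htn)))

lemma hgd {x : ℝ} (hx : x ∈ S) : HasDerivAt g (sec x * g x) x := by
  have h1 : HasDerivAt (fun z => 1 + Real.sin z) (Real.cos x) x :=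
    (Real.hasDerivAt_sin x).const_add 1
  have h2 : HasDerivAt Real.cos (-Real.sin x) x := Real.hasDerivAt_cos x
  have h := h1.div h2 (cos_ne hx)
  refine h.congr_deriv ?_
  have hc := cos_ne hx
  unfold sec g
  field_simp
  linear_combination Real.sin_sq_add_cos_sq x

lemma htnd {x : ℝ} (hx : x ∈ S) : HasDerivAt tn ((sec x)^2) x := by
  have h := (Real.hasDerivAt_sin x).div (Real.hasDerivAt_cos x) (cos_ne hx)
  refine h.congr_deriv ?_
  have hc := cos_ne hx
  unfold sec
  field_simp
  linear_combination Real.sin_sq_add_cos_sq x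

lemma hsecd {x : ℝ} (hx : x ∈ S) : HasDerivAt sec (sec x * tn x) x := by
  have h := (Real.hasDerivAt_cos x).inv (cos_ne hx)
  refine h.congr_deriv ?_
  have hc := cos_ne hx
  unfold sec tn
  field_simp

lemma deriv_g {x : ℝ} (hx : x ∈ S) : deriv g x = sec x * g x := (hgd hx).deriv
lemma deriv_tn {x : ℝ} (hx : x ∈ S) : deriv tn x = (sec x)^2 := (htnd hx).deriv
lemma deriv_sec {x : ℝ} (hx : x ∈ S) : deriv sec x = sec x * tn x := (hsecd hx).deriv

lemma q_eq {x : ℝ} (hx : x ∈ S) : q x = 2⁻¹ * (deriv g x - 1) := by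
  rw [deriv_g hx]
  have hc := cos_ne hx
  unfold q sec g
  field_simp
  linear_combination 2 * Real.sin_sq_add_cos_sq x

lemma hφd {x : ℝ} (hx : x ∈ S) :
    HasDerivAt φ (q x + x * (2 * g x * (sec x * g x) / 4)) x := by
  have hq' : HasDerivAt q (2 * g x ^ 1 * (sec x * g x) / 4) x :=
    (((hgd hx).pow 2).sub_const 1).div_const 4
  have h2 := (hasDerivAt_id x).mul hq'
  have h3 : q x + x * (2 * g x * (sec x * g x) / 4)
      = 1 * q x + id x * (2 * g x ^ 1 * (sec x * g x) / 4) := by simp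
  rw [h3]; exact h2

lemma deriv_φ {x : ℝ} (hx : x ∈ S) :
    deriv φ x = U x * g x + φe x * g x + sec x * φ x := by
  rw [(hφd hx).deriv]
  have hc := cos_ne hx
  unfold U φe φ q tn sec g
  simp only [Real.sin_neg, Real.cos_neg]
  field_simp
  linear_combination (2 * x - 2 * Real.cos x) * Real.sin_sq_add_cos_sq x

noncomputable def A : ℕ → ℝ := fun n => iteratedDeriv n g 0
noncomputable def B : ℕ → ℝ := fun n => iteratedDeriv n φ 0
noncomputable def sR : ℕ → ℝ := fun i => if Even i then -(i:ℝ)/2 else ((i:ℝ)+1)/2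

lemma A_zero : A 0 = 1 := by simp [A, g]

lemma hgneg : ContDiffOn ℝ ⊤ (fun z => g (-z)) S :=
  hg.comp contDiff_neg.contDiffOn (fun _ hx => S_neg hx)

lemma itd_g_neg (n : ℕ) : iteratedDeriv n (fun z => g (-z)) 0 = (-1)^n * A n := by
  have := iteratedDeriv_comp_neg n g 0
  simpa [A, smul_eq_mul] using this

lemma itd_φ_neg (n : ℕ) : iteratedDeriv n (fun z => φ (-z)) 0 = (-1)^n * B n := by
  have := iteratedDeriv_comp_neg n φ 0
  simpa [B, smul_eq_mul] using this

lemma sec_itd (n : ℕ) : iteratedDeriv n sec 0 = if Even n then A n else 0 := by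
  have heq : sec =ᶠ[𝓝 (0:ℝ)] fun z => 2⁻¹ * (g z + g (-z)) := by
    filter_upwards [S_open.mem_nhds S_mem_zero] with z hz
    have hc := cos_ne hz
    unfold sec g
    simp only [Real.sin_neg, Real.cos_neg]
    field_simp
    ring
  rw [heq.iteratedDeriv_eq n, itd_cmul 2⁻¹ (hg.add hgneg) n S_mem_zero,
    itd_add hg hgneg n S_mem_zero, itd_g_neg]
  rcases Nat.even_or_odd n with h | h
  · rw [h.neg_one_pow, if_pos h]; simp only [A]; ring
  · rw [h.neg_one_pow, if_neg (Nat.not_even_iff_odd.mpr h)]; simp only [A]; ring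

lemma tn_itd (n : ℕ) : iteratedDeriv n tn 0 = if Even n then 0 else A n := by
  have heq : tn =ᶠ[𝓝 (0:ℝ)] fun z => 2⁻¹ * (g z - g (-z)) := by
    filter_upwards [S_open.mem_nhds S_mem_zero] with z hz
    have hc := cos_ne hz
    unfold tn g
    simp only [Real.sin_neg, Real.cos_neg]
    field_simp
    ring
  rw [heq.iteratedDeriv_eq n, itd_cmul 2⁻¹ (hg.sub hgneg) n S_mem_zero,
    itd_sub hg hgneg n S_mem_zero, itd_g_neg]
  rcases Nat.even_or_odd n with h | h
  · rw [h.neg_one_pow, if_pos h]; simp only [A]; ring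
  · rw [h.neg_one_pow, if_neg (Nat.not_even_iff_odd.mpr h)]; simp only [A]; ring

lemma φe_itd (n : ℕ) : iteratedDeriv n φe 0 = if Even n then B n else 0 := by
  unfold φe
  rw [itd_cmul 2⁻¹ (hφ.add hφneg) n S_mem_zero, itd_add hφ hφneg n S_mem_zero, itd_φ_neg]
  rcases Nat.even_or_odd n with h | h
  · rw [h.neg_one_pow, if_pos h]; simp only [B]; ring
  · rw [h.neg_one_pow, if_neg (Nat.not_even_iff_odd.mpr h)]; simp only [B]; ring

lemma A_rec (n : ℕ) : A (n+1) = ∑ i ∈ Finset.range (n+1),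
    (n.choose i : ℝ) * ((if Even i then A i else 0) * A (n-i)) := by
  have h1 : A (n+1) = iteratedDeriv n (deriv g) 0 := by rw [A, iteratedDeriv_succ']
  have heq : deriv g =ᶠ[𝓝 (0:ℝ)] fun z => sec z * g z := by
    filter_upwards [S_open.mem_nhds S_mem_zero] with z hz using deriv_g hz
  rw [h1, heq.iteratedDeriv_eq n, itd_mul hsec hg n S_mem_zero]
  refine Finset.sum_congr rfl fun i _ => ?_
  rw [sec_itd]
  rfl

lemma itd_id (i : ℕ) (hi : i ≠ 1) : iteratedDeriv i (id : ℝ → ℝ) 0 = 0 := by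
  match i with
  | 0 => simp
  | (k+2) =>
    rw [iteratedDeriv_succ']
    have hd : deriv (id : ℝ → ℝ) = fun _ => (1:ℝ) := by
      funext y; simp
    rw [hd, itd_one (k+1) (by omega)]

lemma itd_id_one : iteratedDeriv 1 (id : ℝ → ℝ) 0 = 1 := by
  rw [iteratedDeriv_one]; simp

lemma id_mul_itd {h : ℝ → ℝ} (hh : ContDiffOn ℝ ⊤ h S) (n : ℕ) :
    iteratedDeriv n (fun z => z * h z) 0 = n * iteratedDeriv (n-1) h 0 := by
  rcases Nat.eq_zero_or_pos n with rfl | hn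
  · simp
  show iteratedDeriv n (fun z => id z * h z) 0 = _
  rw [itd_mul contDiffOn_id hh n S_mem_zero]
  rw [Finset.sum_eq_single_of_mem 1 (Finset.mem_range.mpr (by omega))]
  · rw [itd_id_one, Nat.choose_one_right]
    ring
  · intro i _ hi
    rw [itd_id i hi]
    ring



lemma U_itd (i : ℕ) : iteratedDeriv i U 0 = sR i * A i := by
  rcases Nat.eq_zero_or_pos i with rfl | hi
  · simp [U, tn, sR]
  have hfa : ContDiffOn ℝ ⊤ (fun z => z * (sec z)^2) S := contDiffOn_id.mul (hsec.pow 2)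
  have hf1 : ContDiffOn ℝ ⊤ (fun z => z * (sec z)^2 + tn z) S := hfa.add htn
  have hf2 : ContDiffOn ℝ ⊤ (fun z => z * (sec z * tn z)) S :=
    contDiffOn_id.mul (hsec.mul htn)
  unfold U
  rw [itd_cmul 2⁻¹ (hf1.sub hf2) i S_mem_zero, itd_sub hf1 hf2 i S_mem_zero,
    itd_add hfa htn i S_mem_zero,
    id_mul_itd (hsec.pow 2) i, id_mul_itd (hsec.mul htn) i]
  have e1 : iteratedDeriv (i-1) (fun z => (sec z)^2) 0 = iteratedDeriv i tn 0 := by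
    have heq : (fun z => (sec z)^2) =ᶠ[𝓝 (0:ℝ)] deriv tn := by
      filter_upwards [S_open.mem_nhds S_mem_zero] with z hz using (deriv_tn hz).symm
    rw [heq.iteratedDeriv_eq, ← iteratedDeriv_succ', Nat.sub_add_cancel hi]
  have e2 : iteratedDeriv (i-1) (fun z => sec z * tn z) 0 = iteratedDeriv i sec 0 := by
    have heq : (fun z => sec z * tn z) =ᶠ[𝓝 (0:ℝ)] deriv sec := by
      filter_upwards [S_open.mem_nhds S_mem_zero] with z hz using (deriv_sec hz).symm
    rw [heq.iteratedDeriv_eq, ← iteratedDeriv_succ', Nat.sub_add_cancel hi]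
  rw [e1, e2, tn_itd, sec_itd]
  rcases Nat.even_or_odd i with h | h
  · rw [if_pos h, if_pos h]
    simp only [sR, if_pos h]
    ring
  · rw [if_neg (Nat.not_even_iff_odd.mpr h), if_neg (Nat.not_even_iff_odd.mpr h)]
    simp only [sR, if_neg (Nat.not_even_iff_odd.mpr h)]
    ring

lemma B_rec (n : ℕ) : B (n+1) = ∑ i ∈ Finset.range (n+1),
    (n.choose i : ℝ) * ((sR i * A i + (if Even i then B i else 0)) * A (n-i)
      + (if Even i then A i else 0) * B (n-i)) := by
  have h1 : B (n+1) = iteratedDeriv n (deriv φ) 0 := by rw [B, iteratedDeriv_succ']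
  have heq : deriv φ =ᶠ[𝓝 (0:ℝ)] fun z => (U z + φe z) * g z + sec z * φ z := by
    filter_upwards [S_open.mem_nhds S_mem_zero] with z hz
    rw [deriv_φ hz]; ring
  rw [h1, heq.iteratedDeriv_eq n,
    itd_add ((hU.add hφe).mul hg) (hsec.mul hφ) n S_mem_zero,
    itd_mul (hU.add hφe) hg n S_mem_zero, itd_mul hsec hφ n S_mem_zero,
    ← Finset.sum_add_distrib]
  refine Finset.sum_congr rfl fun i _ => ?_
  rw [itd_add hU hφe i S_mem_zero, U_itd, φe_itd, sec_itd]
  simp only [A, B]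
  ring

lemma B_zero : B 0 = 0 := by simp [B, φ]

lemma B_one : B 1 = 0 := by
  have h1 : B 1 = deriv φ 0 := by rw [B, iteratedDeriv_one]
  rw [h1, deriv_φ S_mem_zero]
  simp [U, φe, φ, tn]

lemma B_eq {n : ℕ} (hn : 2 ≤ n) : B n = n/2 * A n := by
  have h1 : B n = iteratedDeriv n (fun z => z * q z) 0 := rfl
  rw [h1, id_mul_itd hq n]
  have hg' : ContDiffOn ℝ ⊤ (deriv g) S := hg.deriv_of_isOpen S_open (m := ⊤) le_top
  have heq : q =ᶠ[𝓝 (0:ℝ)] fun z => 2⁻¹ * (deriv g z - 1) := by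
    filter_upwards [S_open.mem_nhds S_mem_zero] with z hz using q_eq hz
  rw [heq.iteratedDeriv_eq, itd_cmul 2⁻¹ (hg'.sub contDiffOn_const) _ S_mem_zero,
    itd_sub hg' contDiffOn_const _ S_mem_zero, itd_one (n-1) (by omega),
    ← iteratedDeriv_succ', Nat.sub_add_cancel (by omega : 1 ≤ n)]
  show (n:ℝ) * (2⁻¹ * (A n - 0)) = _
  ring

end MRaux

namespace MRq

noncomputable def E : ℕ → ℚ := fun n => (MRJ (n+1)).eval (-1)
noncomputable def D : ℕ → ℚ := fun n => (Polynomial.derivative (MRJ (n+1))).eval (-1)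
noncomputable def sQ : ℕ → ℚ := fun i => if Even i then -(i:ℚ)/2 else ((i:ℚ)+1)/2

lemma MRJ_one : MRJ 1 = 1 := by rw [MRJ]

lemma E_zero : E 0 = 1 := by simp [E, MRJ_one]
lemma D_zero : D 0 = 0 := by simp [D, MRJ_one]

lemma MRJ_succ (n : ℕ) : MRJ (n+2) = ∑ i ∈ Finset.range (n+1),
    (n.choose i : Polynomial ℚ) * (∑ j ∈ Finset.range (i+1), X^j) * MRJ (i+1) * MRJ (n+1-i) := by
  rw [MRJ]
  exact Finset.sum_attach (Finset.range (n+1)) (fun i => (n.choose i : Polynomial ℚ)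
    * (∑ j ∈ Finset.range (i+1), X^j) * MRJ (i+1) * MRJ (n+1-i))

lemma geom_eval (i : ℕ) :
    (∑ j ∈ Finset.range (i+1), (X : Polynomial ℚ)^j).eval (-1) = if Even i then 1 else 0 := by
  induction i with
  | zero => simp
  | succ i ih =>
    rw [Finset.sum_range_succ, Polynomial.eval_add, ih, Polynomial.eval_pow, Polynomial.eval_X]
    rcases Nat.even_or_odd i with h | h
    · rw [if_pos h, if_neg (by simp [Nat.even_add_one, h]), (h.add_one).neg_one_pow]
      ring
    · rw [if_neg (Nat.not_even_iff_odd.mpr h), if_pos (by simpa [Nat.even_add_one] using h),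
        (h.add_one).neg_one_pow]
      ring

lemma geom_deriv_eval (i : ℕ) :
    (Polynomial.derivative (∑ j ∈ Finset.range (i+1), (X : Polynomial ℚ)^j)).eval (-1)
      = sQ i := by
  induction i with
  | zero => simp [sQ]
  | succ i ih =>
    rw [Finset.sum_range_succ, Polynomial.derivative_add, Polynomial.eval_add, ih,
      Polynomial.derivative_X_pow]
    simp only [Polynomial.eval_mul, Polynomial.eval_pow, Polynomial.eval_X, Polynomial.eval_C,
      Nat.add_sub_cancel]
    rcases Nat.even_or_odd i with h | h
    · rw [sQ, sQ, if_pos h, if_neg (by simp [Nat.even_add_one, h]), h.neg_one_pow]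
      push_cast; ring
    · rw [sQ, sQ, if_neg (Nat.not_even_iff_odd.mpr h), if_pos (by simpa [Nat.even_add_one] using h),
        h.neg_one_pow]
      push_cast; ring

lemma E_rec (n : ℕ) : E (n+1) = ∑ i ∈ Finset.range (n+1),
    (n.choose i : ℚ) * ((if Even i then E i else 0) * E (n-i)) := by
  show (MRJ (n+2)).eval (-1) = _
  rw [MRJ_succ, Polynomial.eval_finset_sum]
  refine Finset.sum_congr rfl fun i hi => ?_
  have hle := Finset.mem_range.mp hi
  have hidx : n + 1 - i = (n - i) + 1 := by omega
  rw [Polynomial.eval_mul, Polynomial.eval_mul, Polynomial.eval_mul, Polynomial.eval_natCast,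
    geom_eval, hidx]
  show (n.choose i : ℚ) * _ * E i * E (n-i) = _
  rcases Nat.even_or_odd i with h | h
  · rw [if_pos h, if_pos h]; ring
  · rw [if_neg (Nat.not_even_iff_odd.mpr h), if_neg (Nat.not_even_iff_odd.mpr h)]; ring

lemma D_rec (n : ℕ) : D (n+1) = ∑ i ∈ Finset.range (n+1),
    (n.choose i : ℚ) * ((sQ i * E i + (if Even i then D i else 0)) * E (n-i)
      + (if Even i then E i else 0) * D (n-i)) := by
  show (Polynomial.derivative (MRJ (n+2))).eval (-1) = _
  rw [MRJ_succ, map_sum, Polynomial.eval_finset_sum]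
  refine Finset.sum_congr rfl fun i hi => ?_
  have hle := Finset.mem_range.mp hi
  have hidx : n + 1 - i = (n - i) + 1 := by omega
  rw [Polynomial.derivative_mul, Polynomial.derivative_mul, Polynomial.derivative_mul,
    Polynomial.derivative_natCast]
  rw [hidx]
  simp only [Polynomial.eval_add, Polynomial.eval_mul, Polynomial.eval_natCast,
    Polynomial.eval_zero, geom_eval, geom_deriv_eval, zero_mul]
  show ((0 + (n.choose i : ℚ) * sQ i) * E i + (n.choose i : ℚ)
      * (if Even i then (1:ℚ) else 0) * D i) * E (n-i)
      + (n.choose i : ℚ) * (if Even i then (1:ℚ) else 0) * E i * D (n-i) = _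
  rcases Nat.even_or_odd i with h | h
  · rw [if_pos h, if_pos h, if_pos h]; ring
  · rw [if_neg (Nat.not_even_iff_odd.mpr h), if_neg (Nat.not_even_iff_odd.mpr h),
      if_neg (Nat.not_even_iff_odd.mpr h)]; ring

end MRq

section Bridge
open MRaux MRq

lemma sQR (i : ℕ) : ((sQ i : ℚ) : ℝ) = sR i := by
  unfold sQ sR
  split_ifs <;> push_cast <;> ring

lemma EA : ∀ n : ℕ, ((E n : ℚ) : ℝ) = A n := by
  intro n
  induction n using Nat.strong_induction_on with
  | _ n ih =>
    match n with
    | 0 => rw [E_zero, A_zero]; norm_num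
    | (m+1) =>
      rw [E_rec, A_rec, Rat.cast_sum]
      refine Finset.sum_congr rfl fun i hi => ?_
      have hi' := Finset.mem_range.mp hi
      have h1 := ih i (by omega)
      have h2 := ih (m - i) (by omega)
      simp only [Rat.cast_mul, Rat.cast_natCast, apply_ite (fun q : ℚ => (q : ℝ)),
        Rat.cast_zero, h1, h2]

lemma DB : ∀ n : ℕ, ((D n : ℚ) : ℝ) = B n := by
  intro n
  induction n using Nat.strong_induction_on with
  | _ n ih =>
    match n with
    | 0 => rw [D_zero, B_zero]; norm_num
    | (m+1) =>
      rw [D_rec, B_rec, Rat.cast_sum]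
      refine Finset.sum_congr rfl fun i hi => ?_
      have hi' := Finset.mem_range.mp hi
      have h1 := ih i (by omega)
      have h2 := ih (m - i) (by omega)
      simp only [Rat.cast_mul, Rat.cast_add, Rat.cast_natCast,
        apply_ite (fun q : ℚ => (q : ℝ)), Rat.cast_zero, h1, h2, sQR, EA]

end Bridge

theorem MRJ_derivative_at_neg_one :
    (∀ n : ℕ, 2 ≤ n →
      (Polynomial.derivative (MRJ (n + 1))).eval (-1)
          = (n : ℚ) / 2 * (MRJ (n + 1)).eval (-1) ∧
      (((Polynomial.derivative (MRJ (n + 1))).eval (-1) : ℚ) : ℝ)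
          = (n : ℝ) / 2 * zigzag n) ∧
    (Polynomial.derivative (MRJ 1)).eval (-1) = 0 ∧
    (Polynomial.derivative (MRJ 2)).eval (-1) = 0 := by
  have zigA : ∀ n : ℕ, zigzag n = MRaux.A n := fun n => rfl
  refine ⟨fun n hn => ?_, ?_, ?_⟩
  · have hD : ((MRq.D n : ℚ) : ℝ) = (n : ℝ) / 2 * MRaux.A n := by
      rw [DB, MRaux.B_eq hn]
    constructor
    · have hcast : ((MRq.D n : ℚ) : ℝ) = (((n : ℚ) / 2 * MRq.E n : ℚ) : ℝ) := by
        rw [hD, ← EA]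
        push_cast
        ring
      have := Rat.cast_injective (α := ℝ) hcast
      exact this
    · rw [zigA]
      exact hD
  · have h0 : ((MRq.D 0 : ℚ) : ℝ) = 0 := by rw [DB, MRaux.B_zero]
    exact_mod_cast h0
  · have h1 : ((MRq.D 1 : ℚ) : ℝ) = 0 := by rw [DB, MRaux.B_one]
    exact_mod_cast h1
end

section
/- For θ ∈ [-1, 0), the series ∑_{n≥1} J_n(θ)/n! converges (is finite), while for θ ≥ 0 it diverges, since J_n(θ) ≥ J_n(0) = (n-1)! for θ ≥ 0. -/
open Polynomial MeasureTheory

noncomputable def mrj (θ : ℝ) (n : ℕ) : ℝ := aeval θ (MRJ n)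
noncomputable def Sg (θ : ℝ) (i : ℕ) : ℝ := ∑ j ∈ Finset.range (i + 1), θ ^ j
noncomputable def bb (θ : ℝ) (n : ℕ) : ℝ := mrj θ (n + 1) / n.factorial

lemma mrj_rec (θ : ℝ) (n : ℕ) : mrj θ (n + 2) =
    ∑ i ∈ Finset.range (n + 1),
      (n.choose i : ℝ) * Sg θ i * mrj θ (i + 1) * mrj θ (n + 1 - i) := by
  unfold mrj
  rw [MRJ, ← Finset.sum_attach (Finset.range (n+1)) (fun i => (n.choose i : ℝ) * Sg θ i * (aeval θ) (MRJ (i + 1)) * (aeval θ) (MRJ (n + 1 - i)))]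
  rw [map_sum]
  refine Finset.sum_congr rfl fun i _ => ?_
  simp [Sg, map_sum]

lemma mrj_one (θ : ℝ) : mrj θ 1 = 1 := by simp [mrj, MRJ]
lemma mrj_zero (θ : ℝ) : mrj θ 0 = 0 := by simp [mrj, MRJ]

lemma Sg_eq {θ : ℝ} (h : θ < 0) (i : ℕ) : Sg θ i = (1 - θ ^ (i + 1)) / (1 - θ) := by
  rw [Sg, geom_sum_eq (by linarith)]
  rw [div_eq_div_iff (by linarith) (by linarith)]
  ring

lemma abs_pow_le {θ : ℝ} (h1 : -1 ≤ θ) (h0 : θ < 0) (m : ℕ) : |θ ^ m| ≤ 1 := by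
  rw [abs_pow]; exact pow_le_one₀ (abs_nonneg _) (abs_le.2 ⟨h1, by linarith⟩)

lemma theta_le_pow {θ : ℝ} (h1 : -1 ≤ θ) (h0 : θ < 0) (i : ℕ) : θ ≤ θ ^ (i + 1) := by
  have h2 : |θ ^ (i+1)| ≤ |θ| := by
    rw [abs_pow]
    calc |θ| ^ (i+1) ≤ |θ| ^ 1 :=
      pow_le_pow_of_le_one (abs_nonneg _) (abs_le.2 ⟨h1, by linarith⟩) (by omega)
    _ = |θ| := pow_one _
  have h3 : -|θ| ≤ θ ^ (i+1) := by
    have := neg_abs_le (θ ^ (i+1)); linarith [neg_le_neg h2]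
  have : -|θ| = θ := by rw [abs_of_neg h0]; ring
  linarith

lemma Sg_nonneg {θ : ℝ} (h1 : -1 ≤ θ) (i : ℕ) : 0 ≤ Sg θ i := by
  rcases lt_or_ge θ 0 with h0 | h0
  · rw [Sg_eq h0]
    have h := abs_pow_le h1 h0 (i+1)
    have := le_abs_self (θ ^ (i+1))
    apply div_nonneg (by linarith) (by linarith)
  · exact Finset.sum_nonneg fun j _ => pow_nonneg h0 j

lemma Sg_le_one {θ : ℝ} (h1 : -1 ≤ θ) (h0 : θ < 0) (i : ℕ) : Sg θ i ≤ 1 := by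
  rw [Sg_eq h0, div_le_one (by linarith)]
  have := theta_le_pow h1 h0 i
  linarith

lemma one_le_Sg {θ : ℝ} (h0 : 0 ≤ θ) (i : ℕ) : 1 ≤ Sg θ i := by
  have e : Sg θ i = 1 + ∑ j ∈ Finset.Ico 1 (i+1), θ ^ j := by
    rw [Sg, Finset.range_eq_Ico, ← Finset.sum_Ico_consecutive _ (Nat.zero_le 1) (by omega)]
    simp
  have : 0 ≤ ∑ j ∈ Finset.Ico 1 (i+1), θ ^ j := Finset.sum_nonneg fun j _ => pow_nonneg h0 j
  rw [e]; linarith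

lemma Sg_sum_le {θ : ℝ} (h1 : -1 ≤ θ) (h0 : θ < 0) (n : ℕ) :
    ∑ i ∈ Finset.range (n + 1), Sg θ i ≤ (n : ℝ) + 1 := by
  calc ∑ i ∈ Finset.range (n + 1), Sg θ i ≤ ∑ _i ∈ Finset.range (n + 1), (1:ℝ) :=
        Finset.sum_le_sum fun i _ => Sg_le_one h1 h0 i
  _ = (n : ℝ) + 1 := by simp

lemma Sg_sum_le' {θ : ℝ} (h1 : -1 ≤ θ) (h0 : θ < 0) (n : ℕ) :
    ∑ i ∈ Finset.range (n + 1), Sg θ i ≤ ((n : ℝ) + 2) / (1 - θ) := by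
  have key : ∑ i ∈ Finset.range (n + 1), Sg θ i
      = (((n:ℝ) + 1) - θ * Sg θ n) / (1 - θ) := by
    rw [Finset.sum_congr rfl fun i _ => Sg_eq h0 i, ← Finset.sum_div]
    congr 1
    rw [Finset.sum_sub_distrib]
    simp only [Finset.sum_const, Finset.card_range, nsmul_eq_mul, mul_one]
    rw [Sg, Finset.mul_sum]
    push_cast
    congr 1
    exact Finset.sum_congr rfl fun i _ => by rw [← pow_succ']
  rw [key]
  apply div_le_div_of_nonneg_right ?_ (by linarith)
  have hS0 := Sg_nonneg h1 n
  have hS1 := Sg_le_one h1 h0 n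
  nlinarith

lemma mrj_nonneg {θ : ℝ} (h1 : -1 ≤ θ) : ∀ n, 0 ≤ mrj θ n := by
  intro n
  induction n using Nat.strong_induction_on with
  | _ n ih =>
    match n with
    | 0 => rw [mrj_zero]
    | 1 => rw [mrj_one]; norm_num
    | n + 2 =>
      rw [mrj_rec]
      refine Finset.sum_nonneg fun i hi => ?_
      have hi' := Finset.mem_range.mp hi
      have h1' := ih (i+1) (by omega)
      have h2' := ih (n+1-i) (by omega)
      have := Sg_nonneg h1 i
      positivity

lemma factorial_le_mrj {θ : ℝ} (h0 : 0 ≤ θ) : ∀ n, (n.factorial : ℝ) ≤ mrj θ (n + 1) := by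
  intro n
  induction n using Nat.strong_induction_on with
  | _ n ih =>
    match n with
    | 0 => rw [mrj_one]; norm_num
    | n + 1 =>
      rw [mrj_rec]
      have key : ∀ i ∈ Finset.range (n+1),
          ((n.choose i : ℝ) * (i.factorial : ℝ) * ((n-i).factorial : ℝ)) ≤
          (n.choose i : ℝ) * Sg θ i * mrj θ (i + 1) * mrj θ (n + 1 - i) := by
        intro i hi
        have hi' := Finset.mem_range.mp hi
        have e1 := ih i (by omega)
        have e2 : ((n-i).factorial : ℝ) ≤ mrj θ (n + 1 - i) := by
          have := ih (n - i) (by omega)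
          rwa [show n - i + 1 = n + 1 - i from by omega] at this
        have hS := one_le_Sg h0 i
        have f1 : (0:ℝ) ≤ (i.factorial : ℝ) := by positivity
        have f2 : (0:ℝ) ≤ ((n-i).factorial : ℝ) := by positivity
        have hc : (0:ℝ) ≤ (n.choose i : ℝ) := by positivity
        have m1 : (0:ℝ) ≤ mrj θ (i+1) := le_trans f1 e1
        have m2 : (0:ℝ) ≤ mrj θ (n+1-i) := le_trans f2 e2
        have step1 : (i.factorial : ℝ) * ((n-i).factorial : ℝ) ≤ mrj θ (i+1) * mrj θ (n+1-i) :=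
          mul_le_mul e1 e2 f2 m1
        have step2 : mrj θ (i+1) * mrj θ (n+1-i) ≤ Sg θ i * (mrj θ (i+1) * mrj θ (n+1-i)) := by
          nlinarith [mul_nonneg m1 m2]
        calc (n.choose i : ℝ) * (i.factorial : ℝ) * ((n-i).factorial : ℝ)
            = (n.choose i : ℝ) * ((i.factorial : ℝ) * ((n-i).factorial : ℝ)) := by ring
        _ ≤ (n.choose i : ℝ) * (Sg θ i * (mrj θ (i+1) * mrj θ (n+1-i))) :=
            mul_le_mul_of_nonneg_left (le_trans step1 step2) hc
        _ = (n.choose i : ℝ) * Sg θ i * mrj θ (i + 1) * mrj θ (n + 1 - i) := by ring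
      calc ((n+1).factorial : ℝ) = ∑ i ∈ Finset.range (n+1),
            ((n.choose i : ℝ) * (i.factorial : ℝ) * ((n-i).factorial : ℝ)) := by
            rw [Finset.sum_congr rfl (fun i hi => by
              have hi' := Finset.mem_range.mp hi
              rw [show (n.choose i : ℝ) * (i.factorial : ℝ) * ((n-i).factorial : ℝ) = ((n.choose i * i.factorial * (n-i).factorial : ℕ) : ℝ) from by push_cast; ring,
                Nat.choose_mul_factorial_mul_factorial (by omega)])]
            simp [Finset.sum_const, Nat.factorial_succ]
            try ring
      _ ≤ _ := Finset.sum_le_sum key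

lemma bb_zero (θ : ℝ) : bb θ 0 = 1 := by simp [bb, mrj_one]

lemma bb_nonneg {θ : ℝ} (h1 : -1 ≤ θ) (n : ℕ) : 0 ≤ bb θ n := by
  unfold bb
  have := mrj_nonneg h1 (n+1)
  positivity

lemma bb_rec (θ : ℝ) (n : ℕ) : bb θ (n + 1) =
    (∑ i ∈ Finset.range (n + 1), Sg θ i * bb θ i * bb θ (n - i)) / ((n : ℝ) + 1) := by
  have : bb θ (n+1) = mrj θ (n+2) / (n+1).factorial := rfl
  rw [this, mrj_rec, Finset.sum_div, Finset.sum_div]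
  refine Finset.sum_congr rfl fun i hi => ?_
  have hi' := Finset.mem_range.mp hi
  have hni : n + 1 - i = (n - i) + 1 := by omega
  rw [hni]
  show (n.choose i : ℝ) * Sg θ i * mrj θ (i + 1) * mrj θ ((n-i) + 1) / ((n+1).factorial : ℝ)
    = Sg θ i * (mrj θ (i+1) / i.factorial) * (mrj θ ((n-i)+1) / (n-i).factorial) / ((n:ℝ)+1)
  have hkey : ((n.choose i * i.factorial * (n-i).factorial : ℕ) : ℝ) = (n.factorial : ℝ) := by
    rw [Nat.choose_mul_factorial_mul_factorial (by omega)]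
  push_cast at hkey
  have f1 : (i.factorial : ℝ) ≠ 0 := by positivity
  have f2 : ((n-i).factorial : ℝ) ≠ 0 := by positivity
  have f3 : ((n+1).factorial : ℝ) ≠ 0 := by positivity
  have f4 : ((n:ℝ)+1) ≠ 0 := by positivity
  have hfs : ((n+1).factorial : ℝ) = ((n:ℝ)+1) * (n.factorial : ℝ) := by
    rw [Nat.factorial_succ]; push_cast; ring
  field_simp
  rw [hfs]
  linear_combination (Sg θ i * mrj θ (i + 1) * mrj θ (n - i + 1) * ((n:ℝ) + 1)) * hkey

lemma mul3_le {S a b c d : ℝ} (hS : 0 ≤ S) (ha0 : 0 ≤ a) (hb0 : 0 ≤ b)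
    (hac : a ≤ c) (hbd : b ≤ d) (hc0 : 0 ≤ c) : S * a * b ≤ S * (c * d) := by
  have : a * b ≤ c * d := mul_le_mul hac hbd hb0 hc0
  calc S * a * b = S * (a * b) := by ring
  _ ≤ S * (c * d) := mul_le_mul_of_nonneg_left this hS

lemma bb_le_one {θ : ℝ} (h1 : -1 ≤ θ) (h0 : θ < 0) : ∀ n, bb θ n ≤ 1 := by
  intro n
  induction n using Nat.strong_induction_on with
  | _ n ih =>
    match n with
    | 0 => rw [bb_zero]
    | n + 1 =>
      rw [bb_rec]
      rw [div_le_one (by positivity)]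
      calc ∑ i ∈ Finset.range (n + 1), Sg θ i * bb θ i * bb θ (n - i)
          ≤ ∑ i ∈ Finset.range (n + 1), Sg θ i := by
            refine Finset.sum_le_sum fun i hi => ?_
            have hi' := Finset.mem_range.mp hi
            have b1 := bb_nonneg h1 i
            have b2 := bb_nonneg h1 (n - i)
            have c1 := ih i (by omega)
            have c2 := ih (n - i) (by omega)
            have hS := Sg_nonneg h1 i
            have := mul3_le hS b1 b2 c1 c2 (by norm_num)
            simpa using this
      _ ≤ (n : ℝ) + 1 := Sg_sum_le h1 h0 n

lemma bb_step {θ : ℝ} (h1 : -1 ≤ θ) (h0 : θ < 0) (N : ℕ) (hN : 1 ≤ N)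
    (hN2 : 2 / (-θ) ≤ 2 * (N : ℝ) - 1) (β : ℝ) (hβ : 0 ≤ β)
    (hyp : ∀ i : ℕ, N ≤ i + 1 → bb θ i ≤ β) :
    ∀ n : ℕ, 2 * N ≤ n + 1 → bb θ n ≤ (2 - θ) / (2 * (1 - θ)) * β := by
  intro n hn
  obtain ⟨m, rfl⟩ : ∃ m, n = m + 1 := ⟨n - 1, by omega⟩
  rw [bb_rec]
  have hm1 : (0:ℝ) < (m:ℝ) + 1 := by positivity
  rw [div_le_iff₀ hm1]
  have key : ∀ i ∈ Finset.range (m + 1), Sg θ i * bb θ i * bb θ (m - i) ≤ Sg θ i * β := by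
    intro i hi
    have hi' := Finset.mem_range.mp hi
    have hmax : N ≤ i + 1 ∨ N ≤ (m - i) + 1 := by omega
    have b1 := bb_nonneg h1 i
    have b2 := bb_nonneg h1 (m - i)
    have c1 := bb_le_one h1 h0 i
    have c2 := bb_le_one h1 h0 (m - i)
    have hS := Sg_nonneg h1 i
    rcases hmax with hmax | hmax
    · have := mul3_le hS b1 b2 (hyp i hmax) c2 hβ
      calc Sg θ i * bb θ i * bb θ (m - i) ≤ Sg θ i * (β * 1) := this
      _ = Sg θ i * β := by ring
    · have := mul3_le hS b1 b2 c1 (hyp (m - i) hmax) (by norm_num)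
      calc Sg θ i * bb θ i * bb θ (m - i) ≤ Sg θ i * (1 * β) := this
      _ = Sg θ i * β := by ring
  calc ∑ i ∈ Finset.range (m + 1), Sg θ i * bb θ i * bb θ (m - i)
      ≤ ∑ i ∈ Finset.range (m + 1), Sg θ i * β := Finset.sum_le_sum key
  _ = (∑ i ∈ Finset.range (m + 1), Sg θ i) * β := by rw [Finset.sum_mul]
  _ ≤ ((m : ℝ) + 2) / (1 - θ) * β := by
      apply mul_le_mul_of_nonneg_right (Sg_sum_le' h1 h0 m) hβ
  _ ≤ (2 - θ) / (2 * (1 - θ)) * β * ((m:ℝ) + 1) := by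
      have hθm : 2 / (-θ) ≤ (m:ℝ) + 1 := by
        have : (2 * N : ℝ) ≤ (m:ℝ) + 2 := by exact_mod_cast Nat.cast_le.mpr hn
        linarith
      have h2 : 2 ≤ (-θ) * ((m:ℝ) + 1) := by
        rw [div_le_iff₀ (by linarith)] at hθm
        linarith [hθm]
      have hA : ((m:ℝ)+2) * 2 ≤ (2-θ)*((m:ℝ)+1) := by linarith
      have hB : ((m:ℝ)+2)/(1-θ) ≤ (2 - θ) / (2 * (1 - θ)) * ((m:ℝ)+1) := by
        rw [div_mul_eq_mul_div, div_le_div_iff₀ (by linarith) (by linarith)]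
        nlinarith [mul_le_mul_of_nonneg_right hA (show (0:ℝ) ≤ 1-θ by linarith)]
      calc ((m:ℝ)+2)/(1-θ) * β ≤ (2 - θ) / (2 * (1 - θ)) * ((m:ℝ)+1) * β :=
        mul_le_mul_of_nonneg_right hB hβ
      _ = (2 - θ) / (2 * (1 - θ)) * β * ((m:ℝ) + 1) := by ring

lemma bb_decay {θ : ℝ} (h1 : -1 ≤ θ) (h0 : θ < 0) (M : ℕ) (hM1 : 1 ≤ M)
    (hM2 : 2 / (-θ) ≤ 2 * (M : ℝ) - 1) :
    ∀ k n : ℕ, M * 2 ^ k ≤ n + 1 → bb θ n ≤ ((2 - θ) / (2 * (1 - θ))) ^ k := by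
  have hq' : (0:ℝ) ≤ (2 - θ) / (2 * (1 - θ)) := div_nonneg (by linarith) (by linarith)
  intro k
  induction k with
  | zero => intro n _; simpa using bb_le_one h1 h0 n
  | succ k ih =>
    intro n hn
    have hq : (0:ℝ) ≤ ((2 - θ) / (2 * (1 - θ))) ^ k := pow_nonneg hq' k
    have hMk : (M : ℝ) ≤ ((M * 2 ^ k : ℕ) : ℝ) := by
      push_cast
      nlinarith [one_le_pow₀ (show (1:ℝ) ≤ 2 by norm_num) (n := k), (show (1:ℝ) ≤ (M:ℝ) by exact_mod_cast hM1),
        Nat.cast_nonneg (α := ℝ) M]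
    have hNpos : 1 ≤ M * 2 ^ k := Nat.mul_pos hM1 (pow_pos (by norm_num) k)
    have hstep := bb_step h1 h0 (M * 2 ^ k) hNpos (by push_cast at hMk ⊢; linarith)
      (((2 - θ) / (2 * (1 - θ))) ^ k) hq (fun i hi => ih i hi) n
      (by rw [show 2 * (M * 2 ^ k) = M * 2 ^ (k+1) by rw [pow_succ]; ring]; exact hn)
    rw [pow_succ]
    calc bb θ n ≤ (2 - θ) / (2 * (1 - θ)) * ((2 - θ) / (2 * (1 - θ))) ^ k := hstep
    _ = ((2 - θ) / (2 * (1 - θ))) ^ k * ((2 - θ) / (2 * (1 - θ))) := by ring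

lemma bb_psum {θ : ℝ} (h1 : -1 ≤ θ) (h0 : θ < 0) (M : ℕ) (hM1 : 1 ≤ M)
    (hM2 : 2 / (-θ) ≤ 2 * (M : ℝ) - 1) :
    ∀ k : ℕ, ∑ n ∈ Finset.range (M * 2 ^ k), bb θ n / ((n : ℝ) + 1)
      ≤ (M : ℝ) + ∑ j ∈ Finset.range k, ((2 - θ) / (2 * (1 - θ))) ^ j := by
  have hq' : (0:ℝ) ≤ (2 - θ) / (2 * (1 - θ)) := div_nonneg (by linarith) (by linarith)
  intro k
  induction k with
  | zero =>
    simp only [pow_zero, mul_one, Finset.range_zero, Finset.sum_empty, add_zero]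
    calc ∑ n ∈ Finset.range M, bb θ n / ((n : ℝ) + 1)
        ≤ ∑ _n ∈ Finset.range M, (1:ℝ) := by
          refine Finset.sum_le_sum fun n _ => ?_
          have hpos : (0:ℝ) < (n:ℝ) + 1 := by positivity
          rw [div_le_one hpos]
          have h2 : (1:ℝ) ≤ (n:ℝ) + 1 := by linarith
          linarith [bb_le_one h1 h0 n]
    _ = (M : ℝ) := by simp
  | succ k ih =>
    have ha : M * 2 ^ (k+1) = M * 2 ^ k + M * 2 ^ k := by rw [pow_succ]; ring
    have hsplit : ∑ n ∈ Finset.range (M * 2 ^ (k+1)), bb θ n / ((n : ℝ) + 1)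
        = ∑ n ∈ Finset.range (M * 2 ^ k), bb θ n / ((n : ℝ) + 1)
          + ∑ n ∈ Finset.Ico (M * 2 ^ k) (M * 2 ^ k + M * 2 ^ k), bb θ n / ((n : ℝ) + 1) := by
      rw [ha, Finset.range_eq_Ico,
        ← Finset.sum_Ico_consecutive _ (Nat.zero_le (M * 2 ^ k)) (by omega),
        ← Finset.range_eq_Ico]
    have hq0 : (0:ℝ) ≤ ((2 - θ) / (2 * (1 - θ))) ^ k := pow_nonneg hq' k
    have haR : (0:ℝ) < ((M * 2 ^ k : ℕ) : ℝ) + 1 := by positivity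
    have htail : ∑ n ∈ Finset.Ico (M * 2 ^ k) (M * 2 ^ k + M * 2 ^ k), bb θ n / ((n : ℝ) + 1)
        ≤ ((2 - θ) / (2 * (1 - θ))) ^ k := by
      have hterm : ∀ n ∈ Finset.Ico (M * 2 ^ k) (M * 2 ^ k + M * 2 ^ k),
          bb θ n / ((n : ℝ) + 1)
            ≤ ((2 - θ) / (2 * (1 - θ))) ^ k / (((M * 2 ^ k : ℕ) : ℝ) + 1) := by
        intro n hn
        obtain ⟨hn1, _⟩ := Finset.mem_Ico.mp hn
        have hbb := bb_decay h1 h0 M hM1 hM2 k n (by omega)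
        apply div_le_div₀ hq0 hbb haR
        have h3 : ((M * 2 ^ k : ℕ) : ℝ) ≤ (n:ℝ) := Nat.cast_le.mpr hn1
        linarith
      calc ∑ n ∈ Finset.Ico (M * 2 ^ k) (M * 2 ^ k + M * 2 ^ k), bb θ n / ((n : ℝ) + 1)
          ≤ ∑ _n ∈ Finset.Ico (M * 2 ^ k) (M * 2 ^ k + M * 2 ^ k),
              ((2 - θ) / (2 * (1 - θ))) ^ k / (((M * 2 ^ k : ℕ) : ℝ) + 1) :=
            Finset.sum_le_sum hterm
      _ = ((M * 2 ^ k : ℕ) : ℝ)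
            * (((2 - θ) / (2 * (1 - θ))) ^ k / (((M * 2 ^ k : ℕ) : ℝ) + 1)) := by
            rw [Finset.sum_const, Nat.card_Ico]
            simp [nsmul_eq_mul]
      _ ≤ ((2 - θ) / (2 * (1 - θ))) ^ k := by
            rw [mul_div_assoc', div_le_iff₀ haR]
            nlinarith [hq0, Nat.cast_nonneg (α := ℝ) (M * 2 ^ k)]
    rw [hsplit, Finset.sum_range_succ]
    linarith [ih, htail]

lemma bb_summable {θ : ℝ} (h1 : -1 ≤ θ) (h0 : θ < 0) :
    Summable (fun n : ℕ => bb θ n / ((n : ℝ) + 1)) := by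
  set M : ℕ := Nat.ceil (1 / (-θ)) + 1 with hMdef
  have hM1 : 1 ≤ M := by omega
  have hMc : 1 / (-θ) ≤ (Nat.ceil (1 / (-θ)) : ℝ) := Nat.le_ceil _
  have hM2 : 2 / (-θ) ≤ 2 * (M : ℝ) - 1 := by
    have : (M : ℝ) = (Nat.ceil (1 / (-θ)) : ℝ) + 1 := by push_cast [hMdef]; ring
    rw [this]
    have h2 : 2 / (-θ) = 2 * (1 / (-θ)) := by ring
    rw [h2]; linarith
  set q : ℝ := (2 - θ) / (2 * (1 - θ)) with hqdef
  have hq0 : (0:ℝ) ≤ q := div_nonneg (by linarith) (by linarith)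
  have hq1 : q < 1 := by
    rw [hqdef, div_lt_one (by linarith)]; linarith
  apply summable_of_sum_range_le (c := (M : ℝ) + 1 / (1 - q))
    (fun n => div_nonneg (bb_nonneg h1 n) (by positivity))
  intro N
  have hsub : N ≤ M * 2 ^ N := by
    calc N ≤ 2 ^ N := Nat.lt_two_pow_self.le
    _ ≤ M * 2 ^ N := Nat.le_mul_of_pos_left _ hM1
  have hgeom : ∑ j ∈ Finset.range N, q ^ j ≤ 1 / (1 - q) := by
    have hqn : (0:ℝ) ≤ q ^ N := pow_nonneg hq0 N
    have he : (q ^ N - 1) / (q - 1) = (1 - q ^ N) / (1 - q) := by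
      rw [div_eq_div_iff (sub_ne_zero.mpr hq1.ne) (sub_ne_zero.mpr hq1.ne')]
      ring
    rw [geom_sum_eq hq1.ne N, he, div_le_div_iff₀ (by linarith) (by linarith)]
    nlinarith
  calc ∑ n ∈ Finset.range N, bb θ n / ((n : ℝ) + 1)
      ≤ ∑ n ∈ Finset.range (M * 2 ^ N), bb θ n / ((n : ℝ) + 1) :=
        Finset.sum_le_sum_of_subset_of_nonneg (Finset.range_subset_range.mpr hsub)
          (fun n _ _ => div_nonneg (bb_nonneg h1 n) (by positivity))
  _ ≤ (M : ℝ) + ∑ j ∈ Finset.range N, q ^ j := bb_psum h1 h0 M hM1 hM2 N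
  _ ≤ (M : ℝ) + 1 / (1 - q) := by linarith

lemma conv_eq (θ : ℝ) (n : ℕ) :
    mrj θ (n + 1) / ((n + 1).factorial : ℝ) = bb θ n / ((n : ℝ) + 1) := by
  rw [bb, div_div, Nat.factorial_succ]
  push_cast
  ring_nf

lemma not_summable_side {θ : ℝ} (h0 : 0 ≤ θ) :
    ¬ Summable (fun n : ℕ => mrj θ (n + 1) / ((n + 1).factorial : ℝ)) := by
  intro h
  have key : Summable (fun n : ℕ => 1 / ((n : ℝ) + 1)) := by
    apply h.of_nonneg_of_le (fun n => by positivity)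
    intro n
    have hf := factorial_le_mrj h0 n
    have hpos : (0:ℝ) < ((n+1).factorial : ℝ) := by positivity
    rw [div_le_div_iff₀ (by positivity) hpos]
    have : ((n+1).factorial : ℝ) = ((n:ℝ) + 1) * (n.factorial : ℝ) := by
      rw [Nat.factorial_succ]; push_cast; ring
    rw [this]
    calc (1:ℝ) * (((n:ℝ)+1) * (n.factorial:ℝ)) = (n.factorial : ℝ) * ((n:ℝ)+1) := by ring
    _ ≤ mrj θ (n+1) * ((n:ℝ)+1) := by
        apply mul_le_mul_of_nonneg_right hf (by positivity)
  have := (summable_nat_add_iff (f := fun n : ℕ => 1 / (n : ℝ)) 1).mp (by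
    convert key using 2 with n
    · rfl
    push_cast; ring)
  exact Real.not_summable_one_div_natCast this


theorem MRJ_summable_iff (θ : ℝ) (hθ : -1 ≤ θ) :
    Summable (fun n : ℕ => (Polynomial.aeval θ (MRJ (n + 1)) : ℝ) / (n + 1).factorial)
      ↔ θ < 0 := by
  have heq : (fun n : ℕ => (Polynomial.aeval θ (MRJ (n + 1)) : ℝ) / (n + 1).factorial)
      = fun n : ℕ => mrj θ (n + 1) / ((n + 1).factorial : ℝ) := rfl
  constructor
  · intro h
    by_contra h0
    push_neg at h0
    exact not_summable_side h0 (heq ▸ h)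
  · intro h0
    rw [heq]
    have he2 : (fun n : ℕ => mrj θ (n+1) / ((n+1).factorial : ℝ))
        = fun n : ℕ => bb θ n / ((n:ℝ)+1) := funext (conv_eq θ)
    rw [he2]
    exact bb_summable hθ h0
end
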